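/- Let σ ∈ GL_n(R) with σ_{1n} = 0. Then for any j with 2 ≤ j ≤ n, any indices k ≠ l, and any a, b ∈ R, the elementary transvection t_{kl}(a σ'_{1j} b) is a product of 8 elements, each of which is an E_n(R)-conjugate of σ or of σ^{-1}. -/

import Mathlib

open Matrix

/-- The ring of n×n matrices over R. -/
abbrev Mat (n : ℕ) (R : Type*) [Ring R] := Matrix (Fin n) (Fin n) R

/-- The elementary transvection t_{ij}(x) = e + x·e^{ij}. -/
def trv {n : ℕ} {R : Type*} [Ring R] (i j : Fin n) (x : R) : Mat n R :=
  1 + Matrix.single i j x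

/-- The elementary subgroup E_n(R) of GL_n(R), generated by the elementary
transvections t_{ij}(x) with i ≠ j. -/
def En (n : ℕ) (R : Type*) [Ring R] : Subgroup (Mat n R)ˣ :=
  Subgroup.closure
    { u : (Mat n R)ˣ | ∃ i j : Fin n, i ≠ j ∧ ∃ x : R, u.val = trv i j x }

/-- `A` is a product of `m` E_n(R)-conjugates of `σ` and `σ⁻¹`, i.e.
`A = g₁ ⋯ g_m` where each `g_p = ξ_p⁻¹ τ_p ξ_p` with `τ_p ∈ {σ, σ⁻¹}` and `ξ_p ∈ E_n(R)`. -/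
def IsProdConj {n : ℕ} {R : Type*} [Ring R] (m : ℕ) (σ : (Mat n R)ˣ) (A : Mat n R) : Prop :=
  ∃ g : Fin m → (Mat n R)ˣ,
    (∀ p, ∃ ξ ∈ En n R, g p = ξ⁻¹ * σ * ξ ∨ g p = ξ⁻¹ * σ⁻¹ * ξ) ∧
    (List.ofFn g).prod.val = A

namespace Stmt4Aux

variable {n : ℕ} {R : Type*} [Ring R]

/-- dot product -/
def dotP (v u : Fin n → R) : R := ∑ k, v k * u k

/-- rank one matrix -/
def Zm (u v : Fin n → R) : Mat n R := Matrix.of fun i j => u i * v j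

def eV (m : Fin n) : Fin n → R := fun p => if p = m then 1 else 0

@[simp] lemma Zm_apply (u v : Fin n → R) (i j : Fin n) : Zm u v i j = u i * v j := rfl

lemma Zm_mul_Zm (u v u' v' : Fin n → R) :
    Zm u v * Zm u' v' = Zm (fun i => u i * dotP v u') v' := by
  ext i j
  simp [Zm, Matrix.mul_apply, dotP, Finset.mul_sum, Finset.sum_mul, mul_assoc]

lemma mul_Zm (M : Mat n R) (u v : Fin n → R) :
    M * Zm u v = Zm (fun i => ∑ p, M i p * u p) v := by
  ext i j
  simp [Zm, Matrix.mul_apply, Finset.sum_mul, mul_assoc]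

lemma Zm_mul (u v : Fin n → R) (M : Mat n R) :
    Zm u v * M = Zm u (fun j => ∑ p, v p * M p j) := by
  ext i j
  simp [Zm, Matrix.mul_apply, Finset.mul_sum, mul_assoc]

lemma Zm_add (u u' v : Fin n → R) : Zm u v + Zm u' v = Zm (fun i => u i + u' i) v := by
  ext i j; simp [add_mul]

lemma Zm_zero_left (v : Fin n → R) : Zm (fun _ => (0:R)) v = 0 := by
  ext i j; simp

lemma Zm_neg_left (u v : Fin n → R) : Zm (fun i => -u i) v = -Zm u v := by
  ext i j; simp

lemma std_eq_Zm (i j : Fin n) (x : R) :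
    Matrix.single i j x = Zm (fun p => if p = i then x else 0) (eV j) := by
  ext p q
  simp only [Matrix.single, Zm, eV, Matrix.of_apply]
  by_cases h1 : p = i <;> by_cases h2 : q = j <;> simp [h1, h2]
  · intro h; exact absurd h.symm h2
  · intro h; exact absurd h.symm h1
  · intro h; exact absurd h.symm h1

lemma dot_eV_left (m : Fin n) (v : Fin n → R) : dotP (eV m) v = v m := by
  simp [dotP, eV, ite_mul]

lemma dot_eV_right (v : Fin n → R) (m : Fin n) : dotP v (eV m) = v m := by
  simp [dotP, eV, mul_ite]



-- ring identity lemmas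
section RingId
variable {S : Type*} [Ring S]

lemma one_sub_mul_one_add (X : S) (h : X * X = 0) : (1 - X) * (1 + X) = 1 := by
  have : (1 - X) * (1 + X) = 1 + X - X - X * X := by noncomm_ring
  rw [this, h]; abel

lemma one_add_mul_one_sub (X : S) (h : X * X = 0) : (1 + X) * (1 - X) = 1 := by
  have : (1 + X) * (1 - X) = 1 + X - X - X * X := by noncomm_ring
  rw [this, h]; abel

lemma comm4 (M F : S) (hM : M * M = 0) (hF : F * F = 0) (hFM : F * M = 0) :
    (1 - M) * (1 - F) * (1 + M) * (1 + F) = 1 + M * F := by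
  have h2 : (1 + F) * (1 + M) * (1 + M * F) = (1 + M) * (1 + F) := by
    have e1 : (1 + F) * (1 + M) = 1 + M + F + F * M := by noncomm_ring
    rw [e1, hFM, add_zero]
    have e2 : (1 + M + F) * (1 + M * F) = 1 + M + F + M * F + M * (M * F) + F * (M * F) := by
      noncomm_ring
    rw [e2, ← mul_assoc M M F, hM, zero_mul, ← mul_assoc F M F, hFM, zero_mul,
      add_zero, add_zero]
    noncomm_ring
  calc (1 - M) * (1 - F) * (1 + M) * (1 + F)
      = (1 - M) * ((1 - F) * ((1 + M) * (1 + F))) := by noncomm_ring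
    _ = (1 - M) * ((1 - F) * ((1 + F) * (1 + M) * (1 + M * F))) := by rw [h2]
    _ = (1 - M) * ((1 - F) * (1 + F) * ((1 + M) * (1 + M * F))) := by noncomm_ring
    _ = (1 - M) * ((1 + M) * (1 + M * F)) := by rw [one_sub_mul_one_add F hF, one_mul]
    _ = (1 - M) * (1 + M) * (1 + M * F) := by noncomm_ring
    _ = 1 + M * F := by rw [one_sub_mul_one_add M hM, one_mul]

lemma conj3 (F M : S) (hF : F * F = 0) (hMF : M * F = 0) :
    (1 + F) * (1 + M) * (1 - F) = 1 + M + F * M := by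
  have e1 : (1 + F) * (1 + M) * (1 - F)
      = 1 + M + F * M - M * F - F * F - F * (M * F) := by noncomm_ring
  rw [e1, hMF, hF, mul_zero]; abel

end RingId

/-- unipotent unit -/
def unip (M : Mat n R) (h : M * M = 0) : (Mat n R)ˣ :=
  ⟨1 + M, 1 - M, one_add_mul_one_sub M h, one_sub_mul_one_add M h⟩

@[simp] lemma unip_val (M : Mat n R) (h) : (unip M h).val = 1 + M := rfl
@[simp] lemma unip_inv_val (M : Mat n R) (h) : (unip M h)⁻¹.val = 1 - M := rfl

lemma inv_val_of_val_eq {U : (Mat n R)ˣ} {M : Mat n R} (hM : M * M = 0)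
    (h : U.val = 1 + M) : U⁻¹.val = 1 - M := by
  have : U = unip M hM := Units.ext h
  rw [this]; rfl

-- squares of std basis matrices
lemma std_sq (i j : Fin n) (h : j ≠ i) (x y : R) :
    Matrix.single i j x * Matrix.single i j y = 0 := by
  rw [std_eq_Zm, std_eq_Zm, Zm_mul_Zm]
  have : dotP (eV j) (fun p => if p = i then y else 0) = 0 := by
    rw [dot_eV_left]; simp [if_neg h]
  rw [this]
  simpa using Zm_zero_left (R := R) (n := n) (eV j)

/-- elementary transvection as a unit -/
def TU (i j : Fin n) (h : j ≠ i) (x : R) : (Mat n R)ˣ :=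
  unip (Matrix.single i j x) (std_sq i j h x x)

@[simp] lemma TU_val (i j : Fin n) (h) (x : R) : (TU i j h x).val = trv i j x := rfl
@[simp] lemma TU_inv_val (i j : Fin n) (h) (x : R) :
    (TU i j h x)⁻¹.val = 1 - Matrix.single i j x := rfl

lemma TU_mem (i j : Fin n) (h : j ≠ i) (x : R) : TU i j h x ∈ En n R :=
  Subgroup.subset_closure ⟨i, j, fun hh => h hh.symm, x, rfl⟩


/-- column-type unipotent membership: 1 + Zm u (eV m) with u m = 0 lies in En. -/
lemma col_mem_aux (m : Fin n) (u : Fin n → R) (s : Finset (Fin n)) (hm : m ∉ s) :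
    ∃ U : (Mat n R)ˣ, U ∈ En n R ∧
      U.val = 1 + Zm (fun i => if i ∈ s then u i else 0) (eV m) := by
  induction s using Finset.induction_on with
  | empty =>
    refine ⟨1, one_mem _, ?_⟩
    simp only [Finset.notMem_empty, if_false]
    rw [Zm_zero_left]; simp
  | @insert a s ha ih =>
    have ham : a ≠ m := fun h => hm (h ▸ Finset.mem_insert_self a s)
    have hms : m ∉ s := fun h => hm (Finset.mem_insert_of_mem h)
    obtain ⟨U, hUmem, hUval⟩ := ih hms
    refine ⟨TU a m (fun h => ham h.symm) (u a) * U, mul_mem (TU_mem _ _ _ _) hUmem, ?_⟩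
    rw [Units.val_mul, hUval, TU_val, trv, std_eq_Zm]
    have hdot : dotP (eV m) (fun i => if i ∈ s then u i else 0) = 0 := by
      rw [dot_eV_left]; simp [hms]
    rw [add_mul, one_mul, mul_add, mul_one, Zm_mul_Zm, hdot]
    have hz : Zm (fun i => (if i = a then u a else 0) * (0:R)) (eV m) = 0 := by
      ext i j; simp
    rw [hz, add_zero, add_assoc, Zm_add]
    have hfe : (fun i => (if i ∈ s then u i else 0) + if i = a then u a else 0)
        = fun i => if i ∈ insert a s then u i else 0 := by
      funext i
      by_cases hia : i = a
      · subst hia; simp [ha]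
      · simp [hia, Finset.mem_insert]
    rw [hfe]

lemma col_mem (m : Fin n) (u : Fin n → R) (hu : u m = 0) :
    ∃ U : (Mat n R)ˣ, U ∈ En n R ∧ U.val = 1 + Zm u (eV m) := by
  obtain ⟨U, h1, h2⟩ := col_mem_aux m u (Finset.univ.erase m) (Finset.notMem_erase m _)
  refine ⟨U, h1, ?_⟩
  rw [h2]
  have hfe : (fun i => if i ∈ Finset.univ.erase m then u i else 0) = u := by
    funext i
    by_cases him : i = m
    · subst him; simp [hu]
    · simp [Finset.mem_erase, him]
  rw [hfe]

/-- row-type unipotent membership: 1 + Zm (eV m) v with v m = 0 lies in En. -/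
lemma row_mem_aux (m : Fin n) (v : Fin n → R) (s : Finset (Fin n)) (hm : m ∉ s) :
    ∃ U : (Mat n R)ˣ, U ∈ En n R ∧
      U.val = 1 + Zm (eV m) (fun i => if i ∈ s then v i else 0) := by
  induction s using Finset.induction_on with
  | empty =>
    refine ⟨1, one_mem _, ?_⟩
    have hz : Zm (eV m) (fun i : Fin n => if i ∈ (∅ : Finset (Fin n)) then v i else 0) = 0 := by
      ext i j; simp
    rw [hz]; simp
  | @insert a s ha ih =>
    have ham : a ≠ m := fun h => hm (h ▸ Finset.mem_insert_self a s)
    have hms : m ∉ s := fun h => hm (Finset.mem_insert_of_mem h)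
    obtain ⟨U, hUmem, hUval⟩ := ih hms
    refine ⟨U * TU m a ham (v a), mul_mem hUmem (TU_mem _ _ _ _), ?_⟩
    rw [Units.val_mul, hUval, TU_val, trv, std_eq_Zm]
    have hdot : dotP (fun i => if i ∈ s then v i else 0) (fun p => if p = m then v a else 0)
        = 0 := by
      simp only [dotP, mul_ite, mul_zero]
      rw [Finset.sum_ite_eq' Finset.univ m (fun i => (if i ∈ s then v i else 0) * v a)]
      simp [hms]
    rw [mul_add, mul_one, add_mul, one_mul, Zm_mul_Zm, hdot]
    have hz : Zm (fun i => eV m i * (0:R)) (eV a) = 0 := by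
      ext i j; simp
    rw [hz, add_zero, add_assoc]
    have hfe : Zm (eV m) (fun i => if i ∈ s then v i else 0)
        + Zm (fun p => if p = m then v a else 0) (eV a)
        = Zm (eV m) (fun i => if i ∈ insert a s then v i else 0) := by
      ext i jj
      simp only [Zm_apply, eV, Matrix.add_apply]
      by_cases him : i = m
      · subst him
        by_cases hja : jj = a
        · subst hja; simp [ha, ite_mul, mul_ite]
        · simp only [hja, Finset.mem_insert, ite_mul, mul_ite, if_false, one_mul, zero_mul,
            mul_one, mul_zero]
          by_cases hjs : jj ∈ s <;> simp [hjs, hja]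
      · simp [him, ite_mul, mul_ite, Ne.symm him]
    rw [hfe]

lemma row_mem (m : Fin n) (v : Fin n → R) (hv : v m = 0) :
    ∃ U : (Mat n R)ˣ, U ∈ En n R ∧ U.val = 1 + Zm (eV m) v := by
  obtain ⟨U, h1, h2⟩ := row_mem_aux m v (Finset.univ.erase m) (Finset.notMem_erase m _)
  refine ⟨U, h1, ?_⟩
  rw [h2]
  have hfe : (fun i => if i ∈ Finset.univ.erase m then v i else 0) = v := by
    funext i
    by_cases him : i = m
    · subst him; simp [hv]
    · simp [Finset.mem_erase, him]
  rw [hfe]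



lemma Zm_smul_one (u : Fin n → R) :
    (fun i => u i * (1:R)) = u := by funext i; rw [mul_one]

lemma swap_conj (o l : Fin n) (hlo : l ≠ o) :
    ∃ ξ : (Mat n R)ˣ, ξ ∈ En n R ∧
      (∀ k' (w' : R), k' ≠ o → k' ≠ l → (ξ⁻¹).val * trv k' o w' * ξ.val = trv k' l w') ∧
      (∀ w' : R, (ξ⁻¹).val * trv l o w' * ξ.val = trv o l (-w')) := by
  have hol : o ≠ l := hlo.symm
  set Zol : Mat n R := Zm (eV o) (eV l) with hZol
  set Zlo : Mat n R := Zm (eV l) (eV o) with hZlo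
  set Zoo : Mat n R := Zm (eV o) (eV o) with hZoo
  set Zll : Mat n R := Zm (eV l) (eV l) with hZll
  have doo : dotP (eV o) (eV o) = (1:R) := by rw [dot_eV_left]; simp [eV]
  have dll : dotP (eV l) (eV l) = (1:R) := by rw [dot_eV_left]; simp [eV]
  have dol : dotP (eV o) (eV l) = (0:R) := by rw [dot_eV_left]; simp [eV, hol]
  have dlo : dotP (eV l) (eV o) = (0:R) := by rw [dot_eV_left]; simp [eV, hlo]
  have stdol : Matrix.single o l (1:R) = Zol := by
    rw [std_eq_Zm]; rfl
  have stdlo : Matrix.single l o (-1:R) = -Zlo := by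
    rw [std_eq_Zm, hZlo, ← Zm_neg_left]
    have hf : (fun p => if p = l then (-1:R) else 0) = fun i => -(eV l i) := by
      funext p; by_cases h : p = l <;> simp [h, eV]
    rw [hf]
  have hzolol : Zol * Zol = 0 := by
    rw [hZol, Zm_mul_Zm, dlo]
    have hf : (fun i => eV o i * (0:R)) = fun _ => (0:R) := by funext i; rw [mul_zero]
    rw [hf, Zm_zero_left]
  have hzlolo : Zol * Zlo = Zoo := by
    rw [hZol, hZlo, Zm_mul_Zm, dll, hZoo, Zm_smul_one]
  have hzloZol : Zlo * Zol = Zll := by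
    rw [hZlo, hZol, Zm_mul_Zm, doo, hZll, Zm_smul_one]
  have hzooZol : Zoo * Zol = Zol := by
    rw [hZoo, hZol, Zm_mul_Zm, doo, Zm_smul_one]
  set ξ : (Mat n R)ˣ := TU o l hlo 1 * TU l o hol (-1) * TU o l hlo 1 with hξ
  have hXval : ξ.val = 1 + Zol - Zlo - Zoo - Zll := by
    rw [hξ]
    simp only [Units.val_mul, TU_val, trv]
    rw [stdol, stdlo]
    have e1 : (1 + Zol) * (1 + -Zlo) = 1 + Zol - Zlo - Zoo := by
      have e : (1 + Zol) * (1 + -Zlo) = 1 + Zol - Zlo - Zol * Zlo := by noncomm_ring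
      rw [e, hzlolo]
    rw [e1]
    have e2 : (1 + Zol - Zlo - Zoo) * (1 + Zol)
        = 1 + Zol - Zlo - Zoo + Zol + Zol * Zol - Zlo * Zol - Zoo * Zol := by noncomm_ring
    rw [e2, hzolol, hzloZol, hzooZol]; abel
  have hXinv : (ξ⁻¹).val = 1 - Zol + Zlo - Zoo - Zll := by
    have hrev : ξ⁻¹ = (TU o l hlo 1)⁻¹ * (TU l o hol (-1))⁻¹ * (TU o l hlo 1)⁻¹ := by
      rw [hξ, _root_.mul_inv_rev, _root_.mul_inv_rev, mul_assoc]
    rw [hrev]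
    simp only [Units.val_mul, TU_inv_val]
    rw [stdol, stdlo]
    have e1 : (1 - Zol) * (1 - -Zlo) = 1 + Zlo - Zol - Zoo := by
      have e : (1 - Zol) * (1 - -Zlo) = 1 + Zlo - Zol - Zol * Zlo := by noncomm_ring
      rw [e, hzlolo]
    rw [e1]
    have e2 : (1 + Zlo - Zol - Zoo) * (1 - Zol)
        = 1 + Zlo - Zol - Zoo - Zol - Zlo * Zol + Zol * Zol + Zoo * Zol := by noncomm_ring
    rw [e2, hzolol, hzloZol, hzooZol]; abel
  have hmem : ξ ∈ En n R :=
    mul_mem (mul_mem (TU_mem _ _ _ _) (TU_mem _ _ _ _)) (TU_mem _ _ _ _)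
  -- action of right multiplication by ξ on column-o rank-one matrices
  have hright : ∀ uu : Fin n → R, Zm uu (eV o) * ξ.val = Zm uu (eV l) := by
    intro uu
    rw [hXval]
    have e : Zm uu (eV o) * (1 + Zol - Zlo - Zoo - Zll)
        = Zm uu (eV o) + Zm uu (eV o) * Zol - Zm uu (eV o) * Zlo
          - Zm uu (eV o) * Zoo - Zm uu (eV o) * Zll := by noncomm_ring
    rw [e, hZol, hZlo, hZoo, hZll, Zm_mul_Zm, Zm_mul_Zm, Zm_mul_Zm, Zm_mul_Zm,
      doo, dol]
    have hz : (fun i => uu i * (0:R)) = fun _ => (0:R) := by funext i; rw [mul_zero]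
    rw [Zm_smul_one, hz, Zm_zero_left, Zm_zero_left]
    abel
  -- the general conjugation formula
  have hconj : ∀ uu : Fin n → R,
      (ξ⁻¹).val * (1 + Zm uu (eV o)) * ξ.val
        = 1 + Zm (fun i => ∑ p, (ξ⁻¹).val i p * uu p) (eV l) := by
    intro uu
    have e : (ξ⁻¹).val * (1 + Zm uu (eV o)) * ξ.val
        = (ξ⁻¹).val * ξ.val + (ξ⁻¹).val * (Zm uu (eV o) * ξ.val) := by noncomm_ring
    rw [e, hright, Units.inv_mul, mul_Zm]
  refine ⟨ξ, hmem, ?_, ?_⟩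
  · intro k' w' hk'o hk'l
    rw [trv, trv, std_eq_Zm, std_eq_Zm, hconj]
    have hf : (fun i => ∑ p, (ξ⁻¹).val i p * (if p = k' then w' else 0))
        = fun p => if p = k' then w' else 0 := by
      funext i
      rw [Finset.sum_eq_single k']
      · rw [if_pos rfl, hXinv]
        by_cases hik : i = k'
        · subst hik
          simp [Matrix.sub_apply, Matrix.add_apply, Matrix.one_apply, hZol, hZlo, hZoo,
            hZll, Zm_apply, eV, hk'o, hk'l]
        · simp [Matrix.sub_apply, Matrix.add_apply, Matrix.one_apply, hZol, hZlo, hZoo,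
            hZll, Zm_apply, eV, hik, hk'o, hk'l, Ne.symm hik]
      · intro p _ hp; rw [if_neg hp, mul_zero]
      · intro h; exact absurd (Finset.mem_univ k') h
    rw [hf]
  · intro w'
    rw [trv, trv, std_eq_Zm, std_eq_Zm, hconj]
    have hf : (fun i => ∑ p, (ξ⁻¹).val i p * (if p = l then w' else 0))
        = fun p => if p = o then -w' else 0 := by
      funext i
      rw [Finset.sum_eq_single l]
      · rw [if_pos rfl, hXinv]
        by_cases hio : i = o
        · subst hio
          simp [Matrix.sub_apply, Matrix.add_apply, Matrix.one_apply, hZol, hZlo, hZoo,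
            hZll, Zm_apply, eV, hol, hlo]
        · by_cases hil : i = l
          · subst hil
            simp [Matrix.sub_apply, Matrix.add_apply, Matrix.one_apply, hZol, hZlo, hZoo,
              hZll, Zm_apply, eV, hlo, hio]
          · simp [Matrix.sub_apply, Matrix.add_apply, Matrix.one_apply, hZol, hZlo, hZoo,
              hZll, Zm_apply, eV, hio, hil, Ne.symm hio, Ne.symm hil]
      · intro p _ hp; rw [if_neg hp, mul_zero]
      · intro h; exact absurd (Finset.mem_univ l) h
    rw [hf]


lemma conj_prod_list (x : (Mat n R)ˣ) (lst : List (Mat n R)ˣ) :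
    (lst.map fun g => x⁻¹ * g * x).prod = x⁻¹ * lst.prod * x := by
  induction lst with
  | nil => simp
  | cons h t ih =>
    simp only [List.map_cons, List.prod_cons, ih]
    group

lemma conj_transport {m : ℕ} {σ : (Mat n R)ˣ} {A : Mat n R} (ξ : (Mat n R)ˣ)
    (hξ : ξ ∈ En n R) (h : IsProdConj m σ A) :
    IsProdConj m σ ((ξ⁻¹).val * A * ξ.val) := by
  obtain ⟨g, hg, hprod⟩ := h
  refine ⟨fun p => ξ⁻¹ * g p * ξ, ?_, ?_⟩
  · intro p
    obtain ⟨η, hη, hc⟩ := hg p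
    refine ⟨η * ξ, mul_mem hη hξ, ?_⟩
    rcases hc with hc | hc
    · left; show ξ⁻¹ * g p * ξ = _; rw [hc, _root_.mul_inv_rev]; group
    · right; show ξ⁻¹ * g p * ξ = _; rw [hc, _root_.mul_inv_rev]; group
  · have hh : (List.ofFn fun p => ξ⁻¹ * g p * ξ)
        = (List.ofFn g).map fun u => ξ⁻¹ * u * ξ := by
      rw [List.map_ofFn]; rfl
    rw [hh, conj_prod_list, Units.val_mul, Units.val_mul, hprod]


lemma core (σ : (Mat n R)ˣ) (o ν : Fin n) (hνo : ν ≠ o)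
    (h1n : σ.val o ν = 0) (j : Fin n) (hjo : j ≠ o)
    (k' : Fin n) (hk'o : k' ≠ o) (a b : R) :
    IsProdConj 8 σ (trv k' o (a * (σ⁻¹).val o j * b)) := by
  have hoν : o ≠ ν := hνo.symm
  have hoj : o ≠ j := hjo.symm
  set S : Mat n R := σ.val with hS
  set Si : Mat n R := (σ⁻¹).val with hSi
  have hSSi : S * Si = 1 := σ.mul_inv
  have hSiS : Si * S = 1 := σ.inv_mul
  set Cc : Fin n → R := fun i => S i ν with hCc
  set Rr : Fin n → R := fun p => Si o p with hRr
  set u₀ : Fin n → R := fun p => if p = o then 0 else Si ν p with hu₀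
  set κ : R := u₀ k' with hκ
  set α : R := Rr j * b with hα
  set c₁ : R := κ * a - 1 with hc₁
  set vv : Fin n → R := fun i => (if i = k' then 1 else 0) - Cc i * κ with hvv
  set w : Fin n → R := fun p => a * u₀ p with hw
  -- basic dot facts
  have hCo : Cc o = 0 := h1n
  have hu₀o : u₀ o = 0 := if_pos rfl
  have hRC : dotP Rr Cc = 0 := by
    have e : dotP Rr Cc = (Si * S) o ν := by
      simp [dotP, Matrix.mul_apply, hRr, hCc]
    rw [e, hSiS]
    exact Matrix.one_apply_ne hoν
  have hu₀C : dotP u₀ Cc = 1 := by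
    have e : ∀ p, u₀ p * Cc p = Si ν p * S p ν := by
      intro p
      by_cases hp : p = o
      · rw [hp, hu₀o, zero_mul, h1n, mul_zero]
      · simp [hu₀, hp, hCc]
    have e2 : dotP u₀ Cc = ∑ p, Si ν p * S p ν := by
      unfold dotP; exact Finset.sum_congr rfl fun p _ => e p
    rw [e2, show ∑ p, Si ν p * S p ν = (Si * S) ν ν from (Matrix.mul_apply).symm, hSiS]
    exact Matrix.one_apply_eq ν
  have hvvo : vv o = 0 := by
    simp [hvv, Ne.symm hk'o, hCo]
  have hwo : w o = 0 := by simp [hw, hu₀o]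
  have hu₀vv : dotP u₀ vv = 0 := by
    have e : ∀ i, u₀ i * vv i = (if i = k' then u₀ i else 0) - (u₀ i * Cc i) * κ := by
      intro i
      simp only [hvv, mul_sub, mul_ite, mul_one, mul_zero, mul_assoc]
    unfold dotP
    rw [Finset.sum_congr rfl fun i _ => e i, Finset.sum_sub_distrib,
      Finset.sum_ite_eq' Finset.univ k' u₀, ← Finset.sum_mul]
    have : ∑ i, u₀ i * Cc i = dotP u₀ Cc := rfl
    rw [this, hu₀C, one_mul]
    simp [hκ]
  have hwvv : dotP w vv = 0 := by
    have e : ∀ i, w i * vv i = a * (u₀ i * vv i) := by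
      intro i; rw [hw]; rw [mul_assoc]
    unfold dotP
    rw [Finset.sum_congr rfl fun i _ => e i, ← Finset.mul_sum]
    have : ∑ i, u₀ i * vv i = dotP u₀ vv := rfl
    rw [this, hu₀vv, mul_zero]
  -- conjugation of elementary by sigma
  have K1 : ∀ c : R, S * Matrix.single ν o c * Si = Zm (fun i => Cc i * c) Rr := by
    intro c
    rw [std_eq_Zm, mul_Zm, Zm_mul]
    have h1 : (fun i => ∑ p, S i p * (if p = ν then c else 0)) = fun i => Cc i * c := by
      funext i
      simp [mul_ite, Finset.sum_ite_eq', hCc]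
    have h2 : (fun q => ∑ p, eV o p * Si p q) = Rr := by
      funext q
      simp [eV, ite_mul, Finset.sum_ite_eq, hRr]
    rw [h1, h2]
  -- the value of the V gadgets
  have hV : ∀ c b' : R,
      (σ * (TU ν o hoν c)⁻¹ * σ⁻¹ * (TU j o hoj b')⁻¹ * σ * TU ν o hoν c * σ⁻¹
        * TU j o hoj b').val
      = 1 + Zm (fun i => Cc i * (c * (Rr j * b'))) (eV o) := by
    intro c b'
    simp only [Units.val_mul, TU_val, TU_inv_val, trv, ← hS, ← hSi]
    have hre : S * (1 - Matrix.single ν o c) * Si * (1 - Matrix.single j o b')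
        * S * (1 + Matrix.single ν o c) * Si * (1 + Matrix.single j o b')
        = (S * (1 - Matrix.single ν o c) * Si) * (1 - Matrix.single j o b')
          * (S * (1 + Matrix.single ν o c) * Si) * (1 + Matrix.single j o b') := by
      noncomm_ring
    rw [hre]
    have hs1 : S * (1 - Matrix.single ν o c) * Si = 1 - Zm (fun i => Cc i * c) Rr := by
      rw [mul_sub, mul_one, sub_mul, hSSi, K1]
    have hs2 : S * (1 + Matrix.single ν o c) * Si = 1 + Zm (fun i => Cc i * c) Rr := by
      rw [mul_add, mul_one, add_mul, hSSi, K1]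
    rw [hs1, hs2, std_eq_Zm]
    have hM : Zm (fun i => Cc i * c) Rr * Zm (fun i => Cc i * c) Rr = 0 := by
      rw [Zm_mul_Zm]
      have hd : dotP Rr (fun i => Cc i * c) = 0 := by
        unfold dotP
        have e : ∀ p, Rr p * (Cc p * c) = (Rr p * Cc p) * c := by
          intro p; rw [mul_assoc]
        rw [Finset.sum_congr rfl fun p _ => e p, ← Finset.sum_mul]
        have : ∑ p, Rr p * Cc p = dotP Rr Cc := rfl
        rw [this, hRC, zero_mul]
      rw [hd]
      have : (fun i => (Cc i * c) * (0:R)) = fun _ => (0:R) := by funext i; rw [mul_zero]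
      rw [this, Zm_zero_left]
    have hF : Zm (fun p => if p = j then b' else 0) (eV o)
        * Zm (fun p => if p = j then b' else 0) (eV o) = 0 := by
      rw [Zm_mul_Zm, dot_eV_left, if_neg hoj]
      have : (fun i => (if i = j then b' else 0) * (0:R)) = fun _ => (0:R) := by
        funext i; rw [mul_zero]
      rw [this, Zm_zero_left]
    have hFM : Zm (fun p => if p = j then b' else 0) (eV o) * Zm (fun i => Cc i * c) Rr = 0 := by
      rw [Zm_mul_Zm, dot_eV_left, hCo, zero_mul]
      have : (fun i => (if i = j then b' else 0) * (0:R)) = fun _ => (0:R) := by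
        funext i; rw [mul_zero]
      rw [this, Zm_zero_left]
    rw [comm4 _ _ hM hF hFM, Zm_mul_Zm]
    have hd : dotP Rr (fun p => if p = j then b' else 0) = Rr j * b' := by
      unfold dotP
      simp [mul_ite, mul_zero, Finset.sum_ite_eq']
    rw [hd]
    have : (fun i => Cc i * c * (Rr j * b')) = fun i => Cc i * (c * (Rr j * b')) := by
      funext i; rw [mul_assoc]
    rw [this]
  -- the epsilon_F unit
  set F : Mat n R := Zm vv w with hF
  have hFF : F * F = 0 := by
    rw [hF, Zm_mul_Zm, hwvv]
    have : (fun i => vv i * (0:R)) = fun _ => (0:R) := by funext i; rw [mul_zero]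
    rw [this, Zm_zero_left]
  obtain ⟨U₁, hU₁mem, hU₁val⟩ := col_mem o vv hvvo
  obtain ⟨U₂, hU₂mem, hU₂val⟩ := row_mem o w hwo
  have hZv2 : Zm vv (eV o) * Zm vv (eV o) = 0 := by
    rw [Zm_mul_Zm, dot_eV_left, hvvo]
    have : (fun i => vv i * (0:R)) = fun _ => (0:R) := by funext i; rw [mul_zero]
    rw [this, Zm_zero_left]
  have hZw2 : Zm (eV o) w * Zm (eV o) w = 0 := by
    rw [Zm_mul_Zm, dot_eV_right, hwo]
    have : (fun i => eV o i * (0:R)) = fun _ => (0:R) := by funext i; rw [mul_zero]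
    rw [this, Zm_zero_left]
  have hU₁inv : (U₁⁻¹).val = 1 - Zm vv (eV o) := inv_val_of_val_eq hZv2 hU₁val
  have hU₂inv : (U₂⁻¹).val = 1 - Zm (eV o) w := inv_val_of_val_eq hZw2 hU₂val
  set E : (Mat n R)ˣ := U₁⁻¹ * U₂⁻¹ * U₁ * U₂ with hE
  have hEmem : E ∈ En n R :=
    mul_mem (mul_mem (mul_mem (inv_mem hU₁mem) (inv_mem hU₂mem)) hU₁mem) hU₂mem
  have hEval : E.val = 1 + F := by
    rw [hE]
    simp only [Units.val_mul, hU₁inv, hU₂inv, hU₁val, hU₂val]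
    have hFM0 : Zm (eV o) w * Zm vv (eV o) = 0 := by
      rw [Zm_mul_Zm, hwvv]
      have : (fun i => eV o i * (0:R)) = fun _ => (0:R) := by funext i; rw [mul_zero]
      rw [this, Zm_zero_left]
    rw [comm4 _ _ hZv2 hZw2 hFM0, Zm_mul_Zm, dot_eV_left]
    have : (fun i => vv i * eV o o) = vv := by
      funext i; simp [eV]
    rw [this, hF]
  have hEinv : (E⁻¹).val = 1 - F := inv_val_of_val_eq hFF hEval
  -- the units used in the word
  set A1 : (Mat n R)ˣ := TU ν o hoν c₁ with hA1
  set A2 : (Mat n R)ˣ := TU ν o hoν 1 with hA2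
  set B : (Mat n R)ˣ := TU j o hoj b with hB
  have hA1mem : A1 ∈ En n R := TU_mem _ _ _ _
  have hA2mem : A2 ∈ En n R := TU_mem _ _ _ _
  have hBmem : B ∈ En n R := TU_mem _ _ _ _
  -- commutation of the two column-o transvections
  have hcomm : ∀ x y : R, TU ν o hoν x * TU j o hoj y = TU j o hoj y * TU ν o hoν x := by
    intro x y
    apply Units.ext
    simp only [Units.val_mul, TU_val, trv]
    have h1 : Matrix.single ν o x * Matrix.single j o y = 0 := by
      rw [std_eq_Zm, std_eq_Zm, Zm_mul_Zm, dot_eV_left, if_neg hoj]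
      have : (fun i => (if i = ν then x else 0) * (0:R)) = fun _ => (0:R) := by
        funext i; rw [mul_zero]
      rw [this, Zm_zero_left]
    have h2 : Matrix.single j o y * Matrix.single ν o x = 0 := by
      rw [std_eq_Zm, std_eq_Zm, Zm_mul_Zm, dot_eV_left, if_neg hoν]
      have : (fun i => (if i = j then y else 0) * (0:R)) = fun _ => (0:R) := by
        funext i; rw [mul_zero]
      rw [this, Zm_zero_left]
    have e1 : (1 + Matrix.single ν o x) * (1 + Matrix.single j o y)
        = 1 + Matrix.single ν o x + Matrix.single j o y
          + Matrix.single ν o x * Matrix.single j o y := by noncomm_ring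
    have e2 : (1 + Matrix.single j o y) * (1 + Matrix.single ν o x)
        = 1 + Matrix.single ν o x + Matrix.single j o y
          + Matrix.single j o y * Matrix.single ν o x := by noncomm_ring
    rw [e1, e2, h1, h2]
  have hA1B : A1 * B = B * A1 := hcomm c₁ b
  have hA2B : A2 * B = B * A2 := hcomm 1 b
  -- conjugating prefixes
  set q2 : (Mat n R)ˣ := A1⁻¹ with hq2
  set q3 : (Mat n R)ˣ := A1⁻¹ * B⁻¹ with hq3
  set q4 : (Mat n R)ˣ := A1⁻¹ * B⁻¹ * A1 with hq4
  set q5 : (Mat n R)ˣ := E with hq5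
  set q6 : (Mat n R)ˣ := E * A2⁻¹ with hq6
  set q7 : (Mat n R)ˣ := E * A2⁻¹ * B⁻¹ with hq7
  set q8 : (Mat n R)ˣ := E * B⁻¹ with hq8
  have hq2m : q2 ∈ En n R := inv_mem hA1mem
  have hq3m : q3 ∈ En n R := mul_mem (inv_mem hA1mem) (inv_mem hBmem)
  have hq4m : q4 ∈ En n R := mul_mem hq3m hA1mem
  have hq5m : q5 ∈ En n R := hEmem
  have hq6m : q6 ∈ En n R := mul_mem hEmem (inv_mem hA2mem)
  have hq7m : q7 ∈ En n R := mul_mem hq6m (inv_mem hBmem)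
  have hq8m : q8 ∈ En n R := mul_mem hEmem (inv_mem hBmem)
  -- the eight conjugates
  set g : Fin 8 → (Mat n R)ˣ :=
    ![σ, q2 * σ⁻¹ * q2⁻¹, q3 * σ * q3⁻¹, q4 * σ⁻¹ * q4⁻¹, q5 * σ * q5⁻¹,
      q6 * σ⁻¹ * q6⁻¹, q7 * σ * q7⁻¹, q8 * σ⁻¹ * q8⁻¹] with hg
  refine ⟨g, ?_, ?_⟩
  · intro p
    fin_cases p
    · refine ⟨1, one_mem _, Or.inl ?_⟩
      rw [hg]
      show σ = 1⁻¹ * σ * 1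
      rw [inv_one, one_mul, mul_one]
    · exact ⟨q2⁻¹, inv_mem hq2m, Or.inr (by rw [hg]; rfl)⟩
    · exact ⟨q3⁻¹, inv_mem hq3m, Or.inl (by rw [hg]; rfl)⟩
    · exact ⟨q4⁻¹, inv_mem hq4m, Or.inr (by rw [hg]; rfl)⟩
    · exact ⟨q5⁻¹, inv_mem hq5m, Or.inl (by rw [hg]; rfl)⟩
    · exact ⟨q6⁻¹, inv_mem hq6m, Or.inr (by rw [hg]; rfl)⟩
    · exact ⟨q7⁻¹, inv_mem hq7m, Or.inl (by rw [hg]; rfl)⟩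
    · exact ⟨q8⁻¹, inv_mem hq8m, Or.inr (by rw [hg]; rfl)⟩
  · -- the product evaluates to the desired transvection
    have f45 : A1⁻¹ * B * A1 = B := by
      rw [mul_assoc, ← hA1B, ← mul_assoc, inv_mul_cancel, one_mul]
    have f78 : B * A2 * B⁻¹ = A2 := by
      rw [← hA2B, mul_assoc, mul_inv_cancel, mul_one]
    have hlp : (List.ofFn g).prod
        = σ * ((q2 * σ⁻¹ * q2⁻¹) * ((q3 * σ * q3⁻¹) * ((q4 * σ⁻¹ * q4⁻¹) * ((q5 * σ * q5⁻¹)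
          * ((q6 * σ⁻¹ * q6⁻¹) * ((q7 * σ * q7⁻¹) * ((q8 * σ⁻¹ * q8⁻¹) * 1))))))) := by
      rw [hg]
      simp only [List.ofFn_succ, List.ofFn_zero, List.prod_cons, List.prod_nil,
        Matrix.cons_val_zero, Matrix.cons_val_succ, Fin.succ_zero_eq_one]
    have hW : (List.ofFn g).prod
        = (σ * A1⁻¹ * σ⁻¹ * B⁻¹ * σ * A1 * σ⁻¹ * B) * E
          * (σ * A2⁻¹ * σ⁻¹ * B⁻¹ * σ * A2 * σ⁻¹ * B) * E⁻¹ := by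
      rw [hlp, hq2, hq3, hq4, hq5, hq6, hq7, hq8]
      calc σ * ((A1⁻¹ * σ⁻¹ * A1⁻¹⁻¹) * ((A1⁻¹ * B⁻¹ * σ * (A1⁻¹ * B⁻¹)⁻¹)
            * ((A1⁻¹ * B⁻¹ * A1 * σ⁻¹ * (A1⁻¹ * B⁻¹ * A1)⁻¹) * ((E * σ * E⁻¹)
            * ((E * A2⁻¹ * σ⁻¹ * (E * A2⁻¹)⁻¹) * ((E * A2⁻¹ * B⁻¹ * σ * (E * A2⁻¹ * B⁻¹)⁻¹)
            * ((E * B⁻¹ * σ⁻¹ * (E * B⁻¹)⁻¹) * 1)))))))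
          = σ * A1⁻¹ * σ⁻¹ * B⁻¹ * σ * A1 * σ⁻¹ * (A1⁻¹ * B * A1) * E * σ * A2⁻¹ * σ⁻¹
            * B⁻¹ * σ * (B * A2 * B⁻¹) * σ⁻¹ * B * E⁻¹ := by group
        _ = σ * A1⁻¹ * σ⁻¹ * B⁻¹ * σ * A1 * σ⁻¹ * B * E * σ * A2⁻¹ * σ⁻¹
            * B⁻¹ * σ * A2 * σ⁻¹ * B * E⁻¹ := by rw [f45, f78]
        _ = (σ * A1⁻¹ * σ⁻¹ * B⁻¹ * σ * A1 * σ⁻¹ * B) * E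
            * (σ * A2⁻¹ * σ⁻¹ * B⁻¹ * σ * A2 * σ⁻¹ * B) * E⁻¹ := by group
    rw [hW]
    have hV1 := hV c₁ b
    have hV2 := hV 1 b
    rw [← hA1, ← hB] at hV1
    rw [← hA2, ← hB] at hV2
    rw [Units.val_mul, Units.val_mul, Units.val_mul, hV1, hV2, hEval, hEinv]
    set M1 : Mat n R := Zm (fun i => Cc i * (c₁ * (Rr j * b))) (eV o) with hM1
    set M2 : Mat n R := Zm (fun i => Cc i * (1 * (Rr j * b))) (eV o) with hM2
    have hM2' : M2 = Zm (fun i => Cc i * (Rr j * b)) (eV o) := by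
      rw [hM2]
      have : (fun i => Cc i * (1 * (Rr j * b))) = fun i => Cc i * (Rr j * b) := by
        funext i; rw [one_mul]
      rw [this]
    have hM2F : M2 * F = 0 := by
      rw [hM2', hF, Zm_mul_Zm, dot_eV_left, hvvo]
      have : (fun i => Cc i * (Rr j * b) * (0:R)) = fun _ => (0:R) := by
        funext i; rw [mul_zero]
      rw [this, Zm_zero_left]
    have hFM2 : F * M2 = Zm (fun i => vv i * (a * (Rr j * b))) (eV o) := by
      rw [hM2', hF, Zm_mul_Zm]
      have hd : dotP w (fun i => Cc i * (Rr j * b)) = a * (Rr j * b) := by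
        unfold dotP
        have e : ∀ p, w p * (Cc p * (Rr j * b)) = a * ((u₀ p * Cc p) * (Rr j * b)) := by
          intro p
          rw [hw]
          rw [mul_assoc, mul_assoc]
        rw [Finset.sum_congr rfl fun p _ => e p, ← Finset.mul_sum, ← Finset.sum_mul]
        have : ∑ p, u₀ p * Cc p = dotP u₀ Cc := rfl
        rw [this, hu₀C, one_mul]
      rw [hd]
    have hre2 : (1 + M1) * (1 + F) * (1 + M2) * (1 - F)
        = (1 + M1) * ((1 + F) * (1 + M2) * (1 - F)) := by noncomm_ring
    rw [hre2, conj3 F M2 hFF hM2F, hFM2]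
    set G : Mat n R := Zm (fun i => vv i * (a * (Rr j * b))) (eV o) with hG
    have hM1M2 : M1 * M2 = 0 := by
      rw [hM1, hM2', Zm_mul_Zm, dot_eV_left, hCo, zero_mul]
      have : (fun i => Cc i * (c₁ * (Rr j * b)) * (0:R)) = fun _ => (0:R) := by
        funext i; rw [mul_zero]
      rw [this, Zm_zero_left]
    have hM1G : M1 * G = 0 := by
      rw [hM1, hG, Zm_mul_Zm, dot_eV_left, hvvo, zero_mul]
      have : (fun i => Cc i * (c₁ * (Rr j * b)) * (0:R)) = fun _ => (0:R) := by
        funext i; rw [mul_zero]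
      rw [this, Zm_zero_left]
    have hexp : (1 + M1) * (1 + M2 + G) = 1 + (M1 + M2 + G) + M1 * M2 + M1 * G := by
      noncomm_ring
    rw [hexp, hM1M2, hM1G, add_zero, add_zero]
    have hsum : M1 + M2 + G = Matrix.single k' o (a * Si o j * b) := by
      rw [hM1, hM2', hG, Zm_add, Zm_add, std_eq_Zm]
      have auxpos : ∀ C κ' a' r' b' : R,
          C * ((κ'*a' - 1) * (r'*b')) + C * (r'*b') + (1 - C*κ') * (a' * (r'*b'))
            = a' * r' * b' := by
        intros; noncomm_ring
      have auxneg : ∀ C κ' a' r' b' : R,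
          C * ((κ'*a' - 1) * (r'*b')) + C * (r'*b') + (0 - C*κ') * (a' * (r'*b')) = 0 := by
        intros; noncomm_ring
      have hfe : (fun i => Cc i * (c₁ * (Rr j * b)) + Cc i * (Rr j * b)
            + vv i * (a * (Rr j * b)))
          = fun p => if p = k' then a * Si o j * b else 0 := by
        funext i
        by_cases hik : i = k'
        · rw [if_pos hik, hik]
          simp only [hvv, hc₁, if_pos rfl]
          exact auxpos (Cc k') κ a (Rr j) b
        · rw [if_neg hik]
          simp only [hvv, hc₁, if_neg hik]
          exact auxneg (Cc i) κ a (Rr j) b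
      rw [hfe]
    rw [hsum]
    rfl


end Stmt4Aux


open Stmt4Aux in
theorem stmt4 {R : Type*} [Ring R] [Nontrivial R] {n : ℕ} (hn : 3 ≤ n)
    (σ : (Mat n R)ˣ)
    (h1n : σ.val ⟨0, by omega⟩ ⟨n - 1, by omega⟩ = 0)
    (j : Fin n) (hj : 1 ≤ j.val)
    (k l : Fin n) (hkl : k ≠ l) (a b : R) :
    IsProdConj 8 σ (trv k l (a * σ⁻¹.val ⟨0, by omega⟩ j * b)) := by
  set o : Fin n := ⟨0, by omega⟩ with ho
  set ν : Fin n := ⟨n - 1, by omega⟩ with hν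
  have hνo : ν ≠ o := by
    refine Fin.ne_of_val_ne ?_
    show n - 1 ≠ 0
    omega
  have hjo : j ≠ o := by
    refine Fin.ne_of_val_ne ?_
    show j.val ≠ 0
    omega
  by_cases hlo : l = o
  · subst hlo
    exact core σ o ν hνo h1n j hjo k hkl a b
  · obtain ⟨ξ, hξm, hgen, hspec⟩ := swap_conj (R := R) o l hlo
    by_cases hko : k = o
    · subst hko
      have h8 := core σ o ν hνo h1n j hjo l hlo (-a) b
      have h9 := conj_transport ξ hξm h8
      rw [hspec (-a * (σ⁻¹).val o j * b)] at h9
      have : -(-a * (σ⁻¹).val o j * b) = a * (σ⁻¹).val o j * b := by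
        rw [neg_mul, neg_mul, neg_neg]
      rwa [this] at h9
    · have h8 := core σ o ν hνo h1n j hjo k hko a b
      have h9 := conj_transport ξ hξm h8
      rwa [hgen k (a * (σ⁻¹).val o j * b) hko hkl] at h9
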